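/- The constant τ := liminf_{m→∞} m^{2/3}·inf{ E(Y) : Y ⊆ Q, #Y = m } satisfies τ ≥ (2π/5)·ω₃^{−5/3}, where ω₃ := 4π/3. -/

import Mathlib

open MeasureTheory

noncomputable section

/-- Euclidean 3-space. -/
abbrev E3 := EuclideanSpace ℝ (Fin 3)

/-- The closed unit cube Q = [0,1]³. -/
def Qcube : Set E3 := {x | ∀ i, x i ∈ Set.Icc (0 : ℝ) 1}

/-- The quantization energy E(Y) = ∫_Q dist(x,Y)² dx. -/
def quantE (Y : Finset E3) : ℝ := ∫ x in Qcube, (Metric.infDist x (↑Y : Set E3)) ^ 2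

/-- The Voronoi cell of a generator y ∈ Y, relative to Q. -/
def vorCell (Y : Finset E3) (y : E3) : Set E3 :=
  {x ∈ Qcube | ∀ z ∈ Y, dist x y ≤ dist x z}

/-- Y is a minimizer of the quantization energy among n-point subsets of Q. -/
def IsMinimizer (n : ℕ) (Y : Finset E3) : Prop :=
  (↑Y : Set E3) ⊆ Qcube ∧ Y.card = n ∧
    ∀ Z : Finset E3, (↑Z : Set E3) ⊆ Qcube → Z.card = n → quantE Y ≤ quantE Z

/-- ω₃ = 4π/3, the volume of the unit ball in ℝ³. -/
def omega3 : ℝ := 4 * Real.pi / 3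

/-- Γ₁ = (2/5)^{2/3} / 40. -/
def Gamma1 : ℝ := ((2 / 5 : ℝ) ^ ((2 : ℝ) / 3)) / 40

/-- Γ₃ = ω₃^{-1/5} Γ₁^{1/5}. -/
def Gamma3 : ℝ := omega3 ^ (-(1 : ℝ) / 5) * Gamma1 ^ ((1 : ℝ) / 5)

/-- Γ₅ = (1/4)(√(1 + 2⁴·3³/(5²·10³)) − 1) Γ₃. -/
def Gamma5 : ℝ :=
  (1 / 4) * (Real.sqrt (1 + (2 ^ 4 * 3 ^ 3 : ℝ) / (5 ^ 2 * 10 ^ 3)) - 1) * Gamma3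

/-- Γ₄, the diameter upper-bound constant. -/
def Gamma4 : ℝ :=
  (2 * (12 : ℝ) ^ ((1 : ℝ) / 4) * (16 : ℝ) ^ ((1 : ℝ) / 3) /
      (Real.pi ^ ((1 : ℝ) / 4) * omega3 ^ ((1 : ℝ) / 12))) *
    (Real.sqrt (1 + (2 ^ 4 * 3 ^ 3 : ℝ) / (5 ^ 2 * 10 ^ 3)) - 1) ^ (-(1 : ℝ) / 2) *
    ((5 ^ 2 * 10 ^ 3 : ℝ) / (2 ^ 2 * 3 ^ 3)) ^ ((1 : ℝ) / 4)

/-- τ = liminf_{m→∞} m^{2/3} · inf { E(Y) : Y ⊆ Q, #Y = m }. -/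
def tau : ℝ :=
  Filter.liminf
    (fun m : ℕ =>
      (m : ℝ) ^ ((2 : ℝ) / 3) *
        sInf {e : ℝ | ∃ Z : Finset E3, (↑Z : Set E3) ⊆ Qcube ∧ Z.card = m ∧ e = quantE Z})
    Filter.atTop

lemma omega3_pos : 0 < omega3 := by
  have := Real.pi_pos; unfold omega3; linarith

lemma vol_cb (y : E3) (t : ℝ) (ht : 0 ≤ t) :
    volume (Metric.closedBall y t) = ENNReal.ofReal (omega3 * t ^ 3) := by
  rw [EuclideanSpace.volume_closedBall]
  have h1 : Real.Gamma ((Fintype.card (Fin 3) : ℝ) / 2 + 1) = 3 / 4 * Real.sqrt Real.pi := by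
    simp only [Fintype.card_fin]
    have : ((3:ℕ) : ℝ) / 2 + 1 = (3/2 : ℝ) + 1 := by norm_num
    rw [this, Real.Gamma_add_one (by norm_num)]
    have : (3/2 : ℝ) = (1/2 : ℝ) + 1 := by norm_num
    rw [this, Real.Gamma_add_one (by norm_num), Real.Gamma_one_half_eq]
    ring
  rw [h1]
  have hπ : (0:ℝ) < Real.pi := Real.pi_pos
  have hsq : (0:ℝ) < Real.sqrt Real.pi := Real.sqrt_pos.mpr hπ
  have hs : Real.sqrt Real.pi ^ Fintype.card (Fin 3) / (3 / 4 * Real.sqrt Real.pi) = omega3 := by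
    simp only [Fintype.card_fin]
    have h2 : Real.sqrt Real.pi ^ 3 = Real.pi * Real.sqrt Real.pi := by
      rw [pow_succ, sq, Real.mul_self_sqrt hπ.le]
    rw [h2, omega3]
    field_simp
  rw [hs, ← ENNReal.ofReal_pow ht, ← ENNReal.ofReal_mul (by positivity)]
  congr 1; simp only [Fintype.card_fin]; ring

lemma measurableSet_Qcube : MeasurableSet Qcube := by
  have : Qcube = ⋂ i, (fun x : E3 => x i) ⁻¹' Set.Icc (0:ℝ) 1 := by
    ext x; simp [Qcube]
  rw [this]
  refine MeasurableSet.iInter fun i => ?_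
  exact measurableSet_Icc.preimage
    ((measurable_pi_apply i).comp (MeasurableEquiv.toLp 2 (Fin 3 → ℝ)).symm.measurable)

lemma vol_Qcube : volume Qcube = 1 := by
  have h := (EuclideanSpace.volume_preserving_symm_measurableEquiv_toLp (Fin 3)).symm
  have hpre : (⇑(MeasurableEquiv.toLp 2 (Fin 3 → ℝ)).symm.symm) ⁻¹' Qcube
      = Set.univ.pi (fun _ : Fin 3 => Set.Icc (0:ℝ) 1) := by
    ext f
    constructor
    · intro hf i _
      exact hf i
    · intro hf i
      exact hf i (Set.mem_univ i)
  rw [← h.measure_preimage measurableSet_Qcube.nullMeasurableSet, hpre, volume_pi_pi]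
  simp [Real.volume_Icc]

lemma isCompact_Qcube : IsCompact Qcube := by
  have hcl : IsClosed Qcube := by
    have : Qcube = ⋂ i, (fun x : E3 => x i) ⁻¹' Set.Icc (0:ℝ) 1 := by
      ext x; simp [Qcube]
    rw [this]
    exact isClosed_iInter fun i =>
      isClosed_Icc.preimage (EuclideanSpace.proj (𝕜 := ℝ) i).continuous
  have hbdd : Bornology.IsBounded Qcube := by
    refine Metric.isBounded_iff_subset_closedBall 0 |>.mpr ⟨2, fun x hx => ?_⟩
    have : ‖x‖ ≤ 2 := by
      rw [EuclideanSpace.norm_eq]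
      have h1 : ∑ i, ‖x i‖ ^ 2 ≤ 3 := by
        have : ∀ i : Fin 3, ‖x i‖ ^ 2 ≤ 1 := fun i => by
          rw [Real.norm_eq_abs, sq_abs]
          have := hx i
          nlinarith [this.1, this.2]
        calc ∑ i, ‖x i‖ ^ 2 ≤ ∑ _i : Fin 3, (1:ℝ) := Finset.sum_le_sum fun i _ => this i
          _ = 3 := by simp
      calc Real.sqrt (∑ i, ‖x i‖ ^ 2) ≤ Real.sqrt 3 := Real.sqrt_le_sqrt h1
        _ ≤ 2 := by
          rw [show (2:ℝ) = Real.sqrt 4 by rw [show (4:ℝ) = 2^2 by norm_num, Real.sqrt_sq]; norm_num]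
          exact Real.sqrt_le_sqrt (by norm_num)
    simpa [Metric.mem_closedBall, dist_zero_right] using this
  exact Metric.isCompact_of_isClosed_isBounded hcl hbdd

lemma integrableOn_f (Z : Finset E3) :
    IntegrableOn (fun x => (Metric.infDist x (↑Z : Set E3)) ^ 2) Qcube := by
  exact ((Metric.continuous_infDist_pt (↑Z : Set E3)).pow 2).continuousOn.integrableOn_compact
    isCompact_Qcube

lemma quantE_nonneg (Z : Finset E3) : 0 ≤ quantE Z :=
  integral_nonneg fun x => by positivity

lemma quantE_lower (Z : Finset E3) (hZ : Z.Nonempty) (t : ℝ) (ht : 0 < t) :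
    t ^ 2 * (1 - Z.card * (omega3 * t ^ 3)) ≤ quantE Z := by
  set U : Set E3 := ⋃ y ∈ Z, Metric.closedBall y t with hU
  have hUm : MeasurableSet U := by
    refine Finset.measurableSet_biUnion _ fun y _ => measurableSet_closedBall
  have hS : MeasurableSet (Qcube \ U) := measurableSet_Qcube.diff hUm
  have hμS_le : volume (Qcube \ U) ≤ 1 := by
    rw [← vol_Qcube]; exact measure_mono Set.diff_subset
  have hμS_ne : volume (Qcube \ U) ≠ ⊤ := (hμS_le.trans_lt (by norm_num)).ne
  -- pointwise bound on Qcube \ U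
  have hpt : ∀ x ∈ Qcube \ U, t ^ 2 ≤ (Metric.infDist x (↑Z : Set E3)) ^ 2 := by
    intro x hx
    obtain ⟨y, hyZ, hyeq⟩ := (Z.finite_toSet.isCompact).exists_infDist_eq_dist
      (by exact_mod_cast hZ) x
    have : t < dist x y := by
      by_contra h
      exact hx.2 (Set.mem_biUnion hyZ (Metric.mem_closedBall.mpr (not_lt.mp h)))
    have h2 : t ≤ Metric.infDist x (↑Z : Set E3) := by rw [hyeq]; linarith
    exact pow_le_pow_left₀ ht.le h2 2
  have h1 : t ^ 2 * (volume (Qcube \ U)).toReal ≤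
      ∫ x in Qcube \ U, (Metric.infDist x (↑Z : Set E3)) ^ 2 :=
    setIntegral_ge_of_const_le_real hS hμS_ne hpt
      ((integrableOn_f Z).mono_set Set.diff_subset)
  have h2 : (∫ x in Qcube \ U, (Metric.infDist x (↑Z : Set E3)) ^ 2) ≤ quantE Z := by
    refine setIntegral_mono_set (integrableOn_f Z) ?_ ?_
    · exact Filter.Eventually.of_forall fun x => by positivity
    · exact HasSubset.Subset.eventuallyLE Set.diff_subset
  -- volume bound
  have hvol : 1 - (Z.card : ℝ) * (omega3 * t ^ 3) ≤ (volume (Qcube \ U)).toReal := by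
    have hQ : volume Qcube ≤ volume (Qcube \ U) + volume U := by
      calc volume Qcube ≤ volume ((Qcube \ U) ∪ U) := measure_mono (by
          intro x hx
          by_cases h : x ∈ U
          · exact Or.inr h
          · exact Or.inl ⟨hx, h⟩)
        _ ≤ _ := measure_union_le _ _
    have hUvol : volume U ≤ ENNReal.ofReal ((Z.card : ℝ) * (omega3 * t ^ 3)) := by
      calc volume U ≤ ∑ y ∈ Z, volume (Metric.closedBall y t) :=
            measure_biUnion_finset_le _ _
        _ = Z.card * ENNReal.ofReal (omega3 * t ^ 3) := by
            simp [vol_cb _ _ ht.le, Finset.sum_const]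
        _ = ENNReal.ofReal ((Z.card : ℝ) * (omega3 * t ^ 3)) := by
            rw [ENNReal.ofReal_mul (Nat.cast_nonneg _), ENNReal.ofReal_natCast]
    have hUne : volume U ≠ ⊤ := (hUvol.trans_lt ENNReal.ofReal_lt_top).ne
    have := ENNReal.toReal_mono ?_ hQ
    · rw [vol_Qcube, ENNReal.toReal_add hμS_ne hUne] at this
      have hU' : (volume U).toReal ≤ (Z.card : ℝ) * (omega3 * t ^ 3) := by
        have := ENNReal.toReal_mono ENNReal.ofReal_ne_top hUvol
        rwa [ENNReal.toReal_ofReal (mul_nonneg (Nat.cast_nonneg _) (mul_nonneg omega3_pos.le (by positivity)))] at this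
      simp only [ENNReal.toReal_one] at this
      linarith
    · exact ENNReal.add_ne_top.mpr ⟨hμS_ne, hUne⟩
  calc t ^ 2 * (1 - Z.card * (omega3 * t ^ 3))
      ≤ t ^ 2 * (volume (Qcube \ U)).toReal := by
        have := sq_nonneg t; nlinarith [hvol, sq_nonneg t]
    _ ≤ _ := h1.trans h2

local instance : DecidableEq E3 := Classical.decEq _

def gp (k : ℕ) (v : Fin 3 → Fin k) : E3 := WithLp.toLp 2 (fun j => ((v j : ℝ) + 1/2) / k)

lemma gp_apply (k : ℕ) (v : Fin 3 → Fin k) (j : Fin 3) :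
    gp k v j = ((v j : ℝ) + 1/2) / k := rfl

def gridSet (k : ℕ) : Finset E3 := Finset.univ.image (gp k)

lemma gp_injective (k : ℕ) (hk : 0 < k) : Function.Injective (gp k) := by
  intro v w h
  funext j
  have hj : ((v j : ℝ) + 1/2) / k = ((w j : ℝ) + 1/2) / k := congrFun (congrArg WithLp.ofLp h) j
  have hk' : (k : ℝ) ≠ 0 := Nat.cast_ne_zero.mpr hk.ne'
  field_simp at hj
  exact Fin.ext (by have : ((v j : ℕ) : ℝ) = (w j : ℕ) := by linarith
                    exact_mod_cast this)

lemma gridSet_card (k : ℕ) (hk : 0 < k) : (gridSet k).card = k ^ 3 := by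
  rw [gridSet, Finset.card_image_of_injective _ (gp_injective k hk), Finset.card_univ,
    Fintype.card_fun]
  simp

lemma gridSet_subset (k : ℕ) (hk : 0 < k) : (↑(gridSet k) : Set E3) ⊆ Qcube := by
  intro x hx
  simp only [gridSet, Finset.coe_image, Set.mem_image] at hx
  obtain ⟨v, _, rfl⟩ := hx
  intro j
  rw [gp_apply]
  have h1 : ((v j : ℕ) : ℝ) + 1 ≤ k := by exact_mod_cast (v j).is_lt
  have hk' : (0:ℝ) < k := Nat.cast_pos.mpr hk
  constructor
  · positivity
  · rw [div_le_one hk']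
    have : (0:ℝ) ≤ ((v j : ℕ) : ℝ) := Nat.cast_nonneg _
    linarith

lemma grid_cover (k : ℕ) (hk : 0 < k) (x : E3) (hx : x ∈ Qcube) :
    (Metric.infDist x (↑(gridSet k) : Set E3)) ^ 2 ≤ 3 / (4 * k ^ 2) := by
  have hk' : (0:ℝ) < k := Nat.cast_pos.mpr hk
  set v : Fin 3 → Fin k := fun j => ⟨min ⌊x j * k⌋₊ (k - 1), by omega⟩ with hv
  have hcoord : ∀ j : Fin 3, (x j - gp k v j) ^ 2 ≤ 1 / (4 * (k:ℝ) ^ 2) := by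
    intro j
    set n : ℕ := min ⌊x j * k⌋₊ (k - 1) with hn
    have hx0 : 0 ≤ x j := (hx j).1
    have hx1 : x j ≤ 1 := (hx j).2
    have h1 : (n : ℝ) ≤ x j * k := by
      have : (n:ℕ) ≤ ⌊x j * k⌋₊ := min_le_left _ _
      calc (n:ℝ) ≤ (⌊x j * k⌋₊ : ℝ) := by exact_mod_cast this
        _ ≤ x j * k := Nat.floor_le (by positivity)
    have h2 : x j * k ≤ (n : ℝ) + 1 := by
      by_cases hc : ⌊x j * k⌋₊ ≤ k - 1
      · have hn' : n = ⌊x j * k⌋₊ := by omega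
        rw [hn']
        exact (Nat.lt_floor_add_one _).le
      · have hn' : n = k - 1 := by omega
        have : (n:ℝ) + 1 = k := by
          rw [hn']; push_cast [Nat.cast_sub hk]; ring
        rw [this]
        nlinarith
    have hgp : gp k v j = ((n : ℝ) + 1/2) / k := rfl
    rw [hgp]
    have key : (x j * k - ((n:ℝ) + 1/2)) ^ 2 ≤ 1/4 := by nlinarith
    have heq : x j - ((n:ℝ) + 1/2) / k = (x j * k - ((n:ℝ) + 1/2)) / k := by
      field_simp
    rw [heq, div_pow]
    calc (x j * k - ((n:ℝ) + 1/2)) ^ 2 / (k:ℝ) ^ 2 ≤ (1/4) / (k:ℝ)^2 := by gcongr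
      _ = 1 / (4 * (k:ℝ)^2) := by ring
  have hdist : dist x (gp k v) ^ 2 ≤ 3 / (4 * (k:ℝ) ^ 2) := by
    rw [EuclideanSpace.dist_eq, Real.sq_sqrt (by positivity)]
    simp only [Real.dist_eq, sq_abs]
    calc ∑ j, (x j - gp k v j) ^ 2 ≤ ∑ _j : Fin 3, 1 / (4 * (k:ℝ)^2) :=
          Finset.sum_le_sum fun j _ => hcoord j
      _ = 3 / (4 * (k:ℝ)^2) := by
          rw [Finset.sum_const]; simp; ring
  have hmem : gp k v ∈ (↑(gridSet k) : Set E3) := by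
    simp only [gridSet, Finset.coe_image, Finset.coe_univ]
    exact Set.mem_image_of_mem _ (Set.mem_univ v)
  have hle : Metric.infDist x (↑(gridSet k) : Set E3) ≤ dist x (gp k v) :=
    Metric.infDist_le_dist_of_mem hmem
  calc (Metric.infDist x (↑(gridSet k) : Set E3)) ^ 2 ≤ dist x (gp k v) ^ 2 :=
        pow_le_pow_left₀ Metric.infDist_nonneg hle 2
    _ ≤ _ := hdist

lemma quantE_grid_le (k : ℕ) (hk : 0 < k) : quantE (gridSet k) ≤ 3 / (4 * (k:ℝ) ^ 2) := by
  have h := norm_setIntegral_le_of_norm_le_const (μ := volume)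
    (s := Qcube) (f := fun x => (Metric.infDist x (↑(gridSet k) : Set E3)) ^ 2)
    (C := 3 / (4 * (k:ℝ) ^ 2)) (by rw [vol_Qcube]; norm_num)
    (fun x hx => by
      rw [Real.norm_eq_abs, abs_of_nonneg (by positivity)]
      exact grid_cover k hk x hx)
  rw [measureReal_def, vol_Qcube] at h
  simp only [ENNReal.toReal_one, mul_one] at h
  calc quantE (gridSet k) ≤ ‖quantE (gridSet k)‖ := le_abs_self _
    _ ≤ _ := h

def lin (m : ℕ) (i : ℕ) : E3 := WithLp.toLp 2 (fun j => if j = (0 : Fin 3) then (i : ℝ) / m else 0)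

def Sset (m : ℕ) : Set ℝ :=
  {e : ℝ | ∃ Z : Finset E3, (↑Z : Set E3) ⊆ Qcube ∧ Z.card = m ∧ e = quantE Z}

lemma Sset_nonempty (m : ℕ) : (Sset m).Nonempty := by
  refine ⟨quantE ((Finset.range m).image (lin m)), (Finset.range m).image (lin m), ?_, ?_, rfl⟩
  · intro x hx
    simp only [Finset.coe_image, Set.mem_image, Finset.coe_range, Set.mem_Iio] at hx
    obtain ⟨i, hi, rfl⟩ := hx
    intro j
    have him : (0:ℝ) < m := by exact_mod_cast Nat.zero_lt_of_lt hi
    have : lin m i j = if j = 0 then (i:ℝ)/m else 0 := rfl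
    rw [this]
    split
    · constructor
      · positivity
      · rw [div_le_one him]; exact_mod_cast hi.le
    · simp
  · rw [Finset.card_image_of_injOn, Finset.card_range]
    intro a ha b hb hab
    simp only [Finset.coe_range, Set.mem_Iio] at ha hb
    have him : (0:ℝ) < m := by exact_mod_cast Nat.zero_lt_of_lt ha
    have := congrFun (congrArg WithLp.ofLp hab) (0 : Fin 3)
    simp only [lin, if_pos rfl, ↓reduceIte] at this
    field_simp at this
    exact_mod_cast this

lemma Sset_bddBelow (m : ℕ) : BddBelow (Sset m) :=
  ⟨0, fun e ⟨Z, _, _, he⟩ => he ▸ quantE_nonneg Z⟩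

lemma sInf_lower (m : ℕ) (hm : 1 ≤ m) :
    (1/2) * (2 * m * omega3) ^ (-(2:ℝ)/3) ≤ sInf (Sset m) := by
  refine le_csInf (Sset_nonempty m) ?_
  rintro e ⟨Z, hZQ, hZc, rfl⟩
  have hm' : (0:ℝ) < m := by exact_mod_cast hm
  have ha : (0:ℝ) < 2 * m * omega3 := by
    have h := omega3_pos
    nlinarith
  set a : ℝ := 2 * m * omega3 with hadef
  set t : ℝ := a ^ (-(1:ℝ)/3) with htdef
  have ht : 0 < t := Real.rpow_pos_of_pos ha _
  have ht3 : t ^ 3 = a⁻¹ := by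
    rw [htdef, ← Real.rpow_natCast (a ^ (-(1:ℝ)/3)) 3, ← Real.rpow_mul ha.le]
    norm_num
    exact Real.rpow_neg_one a
  have ht2 : t ^ 2 = a ^ (-(2:ℝ)/3) := by
    rw [htdef, ← Real.rpow_natCast (a ^ (-(1:ℝ)/3)) 2, ← Real.rpow_mul ha.le]
    norm_num
  have hZne : Z.Nonempty := Finset.card_pos.mp (by omega)
  have h := quantE_lower Z hZne t ht
  rw [hZc, ht3] at h
  have hsimp : (m:ℝ) * (omega3 * a⁻¹) = 1/2 := by
    rw [hadef]
    field_simp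
    exact mul_inv_cancel₀ omega3_pos.ne'
  rw [hsimp] at h
  calc (1/2) * a ^ (-(2:ℝ)/3) = t ^ 2 * (1 - 1/2) := by rw [ht2]; ring
    _ ≤ quantE Z := h
  
lemma sInf_upper (k : ℕ) (hk : 0 < k) : sInf (Sset (k ^ 3)) ≤ 3 / (4 * (k:ℝ) ^ 2) :=
  le_trans
    (csInf_le (Sset_bddBelow _) ⟨gridSet k, gridSet_subset k hk, gridSet_card k hk, rfl⟩)
    (quantE_grid_le k hk)

theorem stmt_10 : tau ≥ (2 * Real.pi / 5) * omega3 ^ (-(5 : ℝ) / 3) := by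
  have hπ := Real.pi_pos
  have hω := omega3_pos
  set u : ℕ → ℝ := fun m => (m : ℝ) ^ ((2 : ℝ) / 3) * sInf (Sset m) with hu
  have htau : tau = Filter.liminf u Filter.atTop := rfl
  -- the constant computation
  have hconst : (2 * Real.pi / 5) * omega3 ^ (-(5 : ℝ) / 3) ≤ (1/2) * (2 * omega3) ^ (-(2:ℝ)/3) := by
    have h1 : omega3 ^ (-(5:ℝ)/3) = omega3 ^ (-(2:ℝ)/3) * omega3⁻¹ := by
      rw [← Real.rpow_neg_one omega3, ← Real.rpow_add hω]
      norm_num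
    have h2 : (2 * omega3) ^ (-(2:ℝ)/3) = 2 ^ (-(2:ℝ)/3) * omega3 ^ (-(2:ℝ)/3) :=
      Real.mul_rpow (by norm_num) hω.le
    rw [h1, h2]
    have h3 : (2 * Real.pi / 5) * omega3⁻¹ = 3/10 := by
      rw [omega3]
      field_simp
      ring
    have hb : (0:ℝ) < 2 ^ (-(2:ℝ)/3) := Real.rpow_pos_of_pos (by norm_num) _
    have h4 : (3/5 : ℝ) ≤ 2 ^ (-(2:ℝ)/3) := by
      have hcube : ((2:ℝ) ^ (-(2:ℝ)/3)) ^ (3:ℕ) = 1/4 := by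
        rw [← Real.rpow_natCast ((2:ℝ) ^ (-(2:ℝ)/3)) 3, ← Real.rpow_mul (by norm_num)]
        norm_num
      nlinarith [hb, sq_nonneg ((2:ℝ) ^ (-(2:ℝ)/3) - 3/5), sq_nonneg ((2:ℝ) ^ (-(2:ℝ)/3) + 3/5)]
    have hω23 : (0:ℝ) < omega3 ^ (-(2:ℝ)/3) := Real.rpow_pos_of_pos hω _
    calc (2 * Real.pi / 5) * (omega3 ^ (-(2:ℝ)/3) * omega3⁻¹)
        = ((2 * Real.pi / 5) * omega3⁻¹) * omega3 ^ (-(2:ℝ)/3) := by ring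
      _ = (3/10) * omega3 ^ (-(2:ℝ)/3) := by rw [h3]
      _ ≤ ((1/2) * 2 ^ (-(2:ℝ)/3)) * omega3 ^ (-(2:ℝ)/3) := by nlinarith
      _ = 1/2 * (2 ^ (-(2:ℝ)/3) * omega3 ^ (-(2:ℝ)/3)) := by ring
  -- eventual lower bound on u
  have hev : ∀ᶠ m in Filter.atTop, (2 * Real.pi / 5) * omega3 ^ (-(5 : ℝ) / 3) ≤ u m := by
    rw [Filter.eventually_atTop]
    refine ⟨1, fun m hm => ?_⟩
    have hm' : (0:ℝ) < m := by exact_mod_cast hm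
    have h := sInf_lower m hm
    have hmono : (m:ℝ) ^ ((2:ℝ)/3) * ((1/2) * (2 * m * omega3) ^ (-(2:ℝ)/3)) ≤ u m := by
      have : (0:ℝ) ≤ (m:ℝ) ^ ((2:ℝ)/3) := (Real.rpow_pos_of_pos hm' _).le
      exact mul_le_mul_of_nonneg_left h this
    refine le_trans ?_ hmono
    have hsplit : ((2 * m * omega3) : ℝ) ^ (-(2:ℝ)/3)
        = (2 * omega3) ^ (-(2:ℝ)/3) * (m:ℝ) ^ (-(2:ℝ)/3) := by
      rw [show (2 * (m:ℝ) * omega3) = (2 * omega3) * m by ring,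
        Real.mul_rpow (by positivity) hm'.le]
    rw [hsplit]
    have hmm : (m:ℝ) ^ ((2:ℝ)/3) * (m:ℝ) ^ (-(2:ℝ)/3) = 1 := by
      rw [← Real.rpow_add hm']
      norm_num
    calc (2 * Real.pi / 5) * omega3 ^ (-(5 : ℝ) / 3)
        ≤ (1/2) * (2 * omega3) ^ (-(2:ℝ)/3) := hconst
      _ = (m:ℝ) ^ ((2:ℝ)/3) * ((1/2) * ((2 * omega3) ^ (-(2:ℝ)/3) * (m:ℝ) ^ (-(2:ℝ)/3))) := by
          rw [show (m:ℝ) ^ ((2:ℝ)/3) * ((1/2) * ((2 * omega3) ^ (-(2:ℝ)/3) * (m:ℝ) ^ (-(2:ℝ)/3)))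
            = ((m:ℝ) ^ ((2:ℝ)/3) * (m:ℝ) ^ (-(2:ℝ)/3)) * ((1/2) * (2 * omega3) ^ (-(2:ℝ)/3)) by ring,
            hmm, one_mul]
  -- frequent upper bound, for coboundedness
  have hfreq : ∃ᶠ m in Filter.atTop, u m ≤ 3/4 := by
    rw [Filter.frequently_atTop]
    intro N
    set k := max N 1 with hk
    have hk1 : 1 ≤ k := le_max_right _ _
    have hkN : N ≤ k := le_max_left _ _
    refine ⟨k ^ 3, le_trans hkN (Nat.le_self_pow (by norm_num) k), ?_⟩
    have hk' : (0:ℝ) < k := by exact_mod_cast hk1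
    have hpow : ((k ^ 3 : ℕ) : ℝ) ^ ((2:ℝ)/3) = (k:ℝ) ^ 2 := by
      push_cast
      rw [← Real.rpow_natCast (k:ℝ) 3, ← Real.rpow_mul hk'.le]
      norm_num
    show ((k ^ 3 : ℕ) : ℝ) ^ ((2:ℝ)/3) * sInf (Sset (k ^ 3)) ≤ 3/4
    rw [hpow]
    calc (k:ℝ) ^ 2 * sInf (Sset (k ^ 3)) ≤ (k:ℝ) ^ 2 * (3 / (4 * (k:ℝ) ^ 2)) :=
        mul_le_mul_of_nonneg_left (sInf_upper k (by omega)) (by positivity)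
      _ = 3/4 := by field_simp
  have hcob : Filter.IsCoboundedUnder (· ≥ ·) Filter.atTop u :=
    Filter.IsCoboundedUnder.of_frequently_le hfreq
  rw [ge_iff_le, htau]
  exact Filter.le_liminf_of_le hcob hev
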